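/- If a graph G has the equidistant comparability property with constant C(G) and finite maximum degree Δ_G, then G satisfies the local doubling condition: for every r ∈ ℕ with r ≥ 1 and every vertex x, |B(x,2r)| ≤ (1 + Δ_G^r · C(G)) · |B(x,r)|. -/

import Mathlib

open scoped ENNReal

noncomputable def ballCard {V : Type*} (G : SimpleGraph V) (x : V) (r : ℕ) : ℕ :=
  {y | G.dist x y ≤ r}.ncard

noncomputable def ecpConst {V : Type*} (G : SimpleGraph V) : ℝ≥0∞ :=
  ⨆ (x : V) (y : V),
    (ballCard G x (G.dist x y) : ℝ≥0∞) / (ballCard G y (G.dist x y) : ℝ≥0∞)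

noncomputable def maxDeg {V : Type*} (G : SimpleGraph V) : ℝ≥0∞ :=
  ⨆ x : V, ((G.neighborSet x).ncard : ℝ≥0∞)

section Aux

variable {V : Type*} {G : SimpleGraph V}

lemma aux_getVert_walks {u v : V} (w : G.Walk u v) (i : ℕ) :
    ∃ (p : G.Walk u (w.getVert i)) (q : G.Walk (w.getVert i) v),
      p.length ≤ i ∧ q.length ≤ w.length - i := by
  induction w generalizing i with
  | nil => exact ⟨SimpleGraph.Walk.nil, SimpleGraph.Walk.nil, by simp, by simp⟩
  | @cons a b c h q ih =>
    cases i with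
    | zero =>
      exact ⟨SimpleGraph.Walk.nil, SimpleGraph.Walk.cons h q, Nat.le_of_eq rfl, Nat.le_of_eq rfl⟩
    | succ i =>
      obtain ⟨p', q', hp', hq'⟩ := ih i
      exact ⟨SimpleGraph.Walk.cons h p', q', by simpa using hp',
        by simpa [Nat.succ_sub_succ] using hq'⟩

lemma aux_getVert_dist {u v : V} (w : G.Walk u v) (i : ℕ) :
    G.dist u (w.getVert i) ≤ i ∧ G.dist (w.getVert i) v ≤ w.length - i := by
  obtain ⟨p, q, hp, hq⟩ := aux_getVert_walks w i
  exact ⟨(SimpleGraph.dist_le p).trans hp, (SimpleGraph.dist_le q).trans hq⟩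

/-- Key geodesic splitting lemma. -/
lemma aux_split (hconn : G.Connected) {x z : V} {r : ℕ} (h : r ≤ G.dist x z) :
    ∃ y : V, G.dist x y = r ∧ G.dist y z ≤ G.dist x z - r := by
  obtain ⟨w, hw⟩ := (hconn x z).exists_walk_length_eq_dist
  refine ⟨w.getVert r, ?_, ?_⟩
  · obtain ⟨h1, h2⟩ := aux_getVert_dist w r
    rw [hw] at h2
    have htri : G.dist x z ≤ G.dist x (w.getVert r) + G.dist (w.getVert r) z :=
      hconn.dist_triangle
    omega
  · have := (aux_getVert_dist w r).2
    rwa [hw] at this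

/-- If `dist x z = n + 1` then `z` has a neighbor `y` with `dist x y = n`. -/
lemma aux_pred (hconn : G.Connected) {x z : V} {n : ℕ} (h : G.dist x z = n + 1) :
    ∃ y : V, G.Adj y z ∧ G.dist x y = n := by
  obtain ⟨y, hy1, hy2⟩ := aux_split hconn (x := x) (z := z) (r := n) (by omega)
  refine ⟨y, ?_, hy1⟩
  rw [h] at hy2
  have hne : G.dist y z ≠ 0 := fun h0 => by
    have hyz := (hconn y z).dist_eq_zero_iff.mp h0
    rw [hyz] at hy1
    omega
  have : G.dist y z = 1 := by omega
  exact SimpleGraph.dist_eq_one_iff_adj.mp this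

lemma sphere_finite (hconn : G.Connected) (hloc : ∀ x : V, (G.neighborSet x).Finite)
    (x : V) : ∀ r : ℕ, {y : V | G.dist x y = r}.Finite := by
  intro r
  induction r with
  | zero =>
    refine Set.Finite.subset (Set.finite_singleton x) ?_
    intro y hy
    simp only [Set.mem_setOf_eq] at hy
    have := (hconn x y).dist_eq_zero_iff.mp hy
    simp [this.symm]
  | succ n ih =>
    refine Set.Finite.subset (Set.Finite.biUnion ih fun y _ => hloc y) ?_
    intro z hz
    simp only [Set.mem_setOf_eq] at hz
    obtain ⟨y, hadj, hdy⟩ := aux_pred hconn hz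
    exact Set.mem_biUnion hdy ((G.mem_neighborSet y z).mpr hadj)

lemma ball_finite (hconn : G.Connected) (hloc : ∀ x : V, (G.neighborSet x).Finite)
    (x : V) (r : ℕ) : {y : V | G.dist x y ≤ r}.Finite := by
  have : {y : V | G.dist x y ≤ r} ⊆ ⋃ i ∈ Finset.range (r + 1), {y : V | G.dist x y = i} := by
    intro y hy
    simp only [Set.mem_setOf_eq] at hy
    exact Set.mem_biUnion (Finset.mem_range.mpr (by omega)) rfl
  exact Set.Finite.subset (Set.Finite.biUnion (Finset.range (r + 1)).finite_toSet
    fun i _ => sphere_finite hconn hloc x i) this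

lemma ncard_biUnion_le {α β : Type*} (T : Finset α) (f : α → Set β) :
    (⋃ a ∈ T, f a).ncard ≤ ∑ a ∈ T, (f a).ncard := by
  classical
  induction T using Finset.induction with
  | empty => simp
  | @insert a s ha ih =>
    rw [Finset.set_biUnion_insert, Finset.sum_insert ha]
    exact (Set.ncard_union_le _ _).trans (by omega)

lemma deg_le_maxDeg (y : V) : ((G.neighborSet y).ncard : ℝ≥0∞) ≤ maxDeg G :=
  le_iSup (fun x => ((G.neighborSet x).ncard : ℝ≥0∞)) y

lemma sphere_card_le (hconn : G.Connected) (hloc : ∀ x : V, (G.neighborSet x).Finite)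
    (x : V) : ∀ r : ℕ, ({y : V | G.dist x y = r}.ncard : ℝ≥0∞) ≤ maxDeg G ^ r := by
  intro r
  induction r with
  | zero =>
    have hsub : {y : V | G.dist x y = 0} ⊆ {x} := by
      intro y hy
      simp only [Set.mem_setOf_eq] at hy
      simp [((hconn x y).dist_eq_zero_iff.mp hy).symm]
    have := Set.ncard_le_ncard hsub (Set.finite_singleton x)
    simpa using this.trans_eq (Set.ncard_singleton x)
  | succ n ih =>
    set T := (sphere_finite hconn hloc x n).toFinset with hT
    have hsub : {y : V | G.dist x y = n + 1} ⊆ ⋃ y ∈ T, G.neighborSet y := by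
      intro z hz
      simp only [Set.mem_setOf_eq] at hz
      obtain ⟨y, hadj, hdy⟩ := aux_pred hconn hz
      exact Set.mem_biUnion (by rw [hT]; exact (sphere_finite hconn hloc x n).mem_toFinset.mpr hdy) ((G.mem_neighborSet y z).mpr hadj)
    have hfin : (⋃ y ∈ T, G.neighborSet y).Finite :=
      Set.Finite.biUnion T.finite_toSet fun y _ => hloc y
    have h1 : {y : V | G.dist x y = n + 1}.ncard ≤ ∑ y ∈ T, (G.neighborSet y).ncard :=
      (Set.ncard_le_ncard hsub hfin).trans (ncard_biUnion_le T _)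
    calc ({y : V | G.dist x y = n + 1}.ncard : ℝ≥0∞)
        ≤ ∑ y ∈ T, ((G.neighborSet y).ncard : ℝ≥0∞) := by
          exact_mod_cast (Nat.cast_le.mpr h1).trans_eq (Nat.cast_sum T _)
      _ ≤ ∑ _y ∈ T, maxDeg G := Finset.sum_le_sum fun y _ => deg_le_maxDeg y
      _ = (T.card : ℝ≥0∞) * maxDeg G := by rw [Finset.sum_const, nsmul_eq_mul]
      _ ≤ maxDeg G ^ n * maxDeg G := by
          apply mul_le_mul_left
          have : T.card = {y : V | G.dist x y = n}.ncard := by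
            rw [hT, Set.ncard_eq_toFinset_card _ (sphere_finite hconn hloc x n)]
          rw [this]; exact ih
      _ = maxDeg G ^ (n + 1) := (pow_succ _ _).symm

end Aux

theorem stmt4 {V : Type*} (G : SimpleGraph V) (hconn : G.Connected)
    (hloc : ∀ x : V, (G.neighborSet x).Finite) (hV : Infinite V)
    (hECP : ecpConst G < ⊤) (hΔ : maxDeg G < ⊤) :
    ∀ (x : V) (r : ℕ), 1 ≤ r →
      (ballCard G x (2 * r) : ℝ≥0∞) ≤
        (1 + maxDeg G ^ r * ecpConst G) * (ballCard G x r : ℝ≥0∞) := by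
  intro x r _hr
  classical
  set T := (sphere_finite hconn hloc x r).toFinset with hT
  -- covering: B(x, 2r) ⊆ B(x, r) ∪ ⋃_{y ∈ S(x,r)} B(y, r)
  have hcov : {z : V | G.dist x z ≤ 2 * r} ⊆
      {z : V | G.dist x z ≤ r} ∪ ⋃ y ∈ T, {z : V | G.dist y z ≤ r} := by
    intro z hz
    simp only [Set.mem_setOf_eq] at hz
    by_cases hle : G.dist x z ≤ r
    · exact Or.inl hle
    · push_neg at hle
      obtain ⟨y, hy1, hy2⟩ := aux_split hconn (x := x) (z := z) (r := r) (by omega)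
      refine Or.inr (Set.mem_biUnion (by rw [hT]; exact (sphere_finite hconn hloc x r).mem_toFinset.mpr hy1) ?_)
      simp only [Set.mem_setOf_eq]
      omega
  have hfinU : ({z : V | G.dist x z ≤ r} ∪ ⋃ y ∈ T, {z : V | G.dist y z ≤ r}).Finite :=
    (ball_finite hconn hloc x r).union
      (Set.Finite.biUnion T.finite_toSet fun y _ => ball_finite hconn hloc y r)
  -- counting in ℕ
  have hnat : ballCard G x (2 * r) ≤ ballCard G x r + ∑ y ∈ T, ballCard G y r := by
    have h1 := Set.ncard_le_ncard hcov hfinU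
    have h2 := Set.ncard_union_le {z : V | G.dist x z ≤ r} (⋃ y ∈ T, {z : V | G.dist y z ≤ r})
    have h3 := ncard_biUnion_le T (fun y => {z : V | G.dist y z ≤ r})
    simp only [ballCard]
    omega
  -- ball cards are positive
  have hbpos : ∀ y : V, (ballCard G y r : ℝ≥0∞) ≠ 0 := by
    intro y
    have : 0 < ballCard G y r := by
      rw [ballCard, Set.ncard_pos (ball_finite hconn hloc y r)]
      exact ⟨y, by simp [SimpleGraph.dist_self]⟩
    exact_mod_cast this.ne'
  -- ECP bound: for y on the sphere, |B(y,r)| ≤ C(G) * |B(x,r)|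
  have hecp : ∀ y ∈ T, (ballCard G y r : ℝ≥0∞) ≤ ecpConst G * (ballCard G x r : ℝ≥0∞) := by
    intro y hy
    have hdyx : G.dist y x = r := by
      rw [SimpleGraph.dist_comm]
      simpa [hT] using hy
    have hle : (ballCard G y (G.dist y x) : ℝ≥0∞) / (ballCard G x (G.dist y x) : ℝ≥0∞) ≤
        ecpConst G :=
      le_iSup₂ (f := fun a b : V =>
        (ballCard G a (G.dist a b) : ℝ≥0∞) / (ballCard G b (G.dist a b) : ℝ≥0∞)) y x
    rw [hdyx] at hle
    exact (ENNReal.div_le_iff (hbpos x) (ENNReal.natCast_ne_top _)).mp hle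
  calc (ballCard G x (2 * r) : ℝ≥0∞)
      ≤ (ballCard G x r : ℝ≥0∞) + ∑ y ∈ T, (ballCard G y r : ℝ≥0∞) := by
        exact_mod_cast Nat.cast_le.mpr hnat
    _ ≤ (ballCard G x r : ℝ≥0∞) + ∑ _y ∈ T, ecpConst G * (ballCard G x r : ℝ≥0∞) :=
        add_le_add_right (Finset.sum_le_sum hecp) _
    _ = (ballCard G x r : ℝ≥0∞) +
        (T.card : ℝ≥0∞) * (ecpConst G * (ballCard G x r : ℝ≥0∞)) := by
        rw [Finset.sum_const, nsmul_eq_mul]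
    _ ≤ (ballCard G x r : ℝ≥0∞) +
        maxDeg G ^ r * (ecpConst G * (ballCard G x r : ℝ≥0∞)) := by
        apply add_le_add_right
        apply mul_le_mul_left
        have : (T.card : ℝ≥0∞) = ({y : V | G.dist x y = r}.ncard : ℝ≥0∞) := by
          rw [hT, Set.ncard_eq_toFinset_card _ (sphere_finite hconn hloc x r)]
        rw [this]
        exact sphere_card_le hconn hloc x r
    _ = (1 + maxDeg G ^ r * ecpConst G) * (ballCard G x r : ℝ≥0∞) := by ring
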